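/- With f(k) = (2k/(4π))^{k/2} e^{-k/2} · 2π^{(k+1)/2}/Γ((k+1)/2) the entropy of the round k-sphere, one has lim_{k→∞} f(k) = √2. -/

import Mathlib

open Filter

/-- `f k = (2k/(4π))^{k/2} e^{-k/2} · 2π^{(k+1)/2} / Γ((k+1)/2)`, the entropy of the
round `k`-sphere (Stone's computation). -/
noncomputable def sphereEntropy (k : ℕ) : ℝ :=
  (2 * k / (4 * Real.pi)) ^ ((k : ℝ) / 2) * Real.exp (-(k : ℝ) / 2) *
    (2 * Real.pi ^ (((k : ℝ) + 1) / 2) / Real.Gamma (((k : ℝ) + 1) / 2))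

namespace SphereEntropyAux

open Real

/-- The half-step Gamma ratio `Γ((k+2)/2)/Γ((k+1)/2)`. -/
noncomputable def rG (k : ℕ) : ℝ :=
  Real.Gamma (((k : ℝ) + 2) / 2) / Real.Gamma (((k : ℝ) + 1) / 2)

lemma Gpos1 (k : ℕ) : 0 < Real.Gamma (((k : ℝ) + 1) / 2) :=
  Real.Gamma_pos_of_pos (by positivity)

lemma Gpos2 (k : ℕ) : 0 < Real.Gamma (((k : ℝ) + 2) / 2) :=
  Real.Gamma_pos_of_pos (by positivity)

lemma Gpos3 (k : ℕ) : 0 < Real.Gamma (((k : ℝ) + 3) / 2) :=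
  Real.Gamma_pos_of_pos (by positivity)

lemma rG_pos (k : ℕ) : 0 < rG k := div_pos (Gpos2 k) (Gpos1 k)

lemma rG_succ (k : ℕ) :
    rG (k + 1) = Real.Gamma (((k : ℝ) + 3) / 2) / Real.Gamma (((k : ℝ) + 2) / 2) := by
  unfold rG; push_cast; ring_nf

/-- `r_k r_{k+1} = (k+1)/2`. -/
lemma rG_mul_succ (k : ℕ) : rG k * rG (k + 1) = ((k : ℝ) + 1) / 2 := by
  rw [rG_succ, rG]
  have h3 : Real.Gamma (((k : ℝ) + 3) / 2) = (((k : ℝ) + 1) / 2) * Real.Gamma (((k : ℝ) + 1) / 2) := by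
    have : ((k : ℝ) + 3) / 2 = ((k : ℝ) + 1) / 2 + 1 := by ring
    rw [this, Real.Gamma_add_one (by positivity)]
  rw [h3]
  field_simp [(Gpos1 k).ne', (Gpos2 k).ne']

/-- Monotonicity of the half-step Gamma ratio, from log-convexity of `Γ`. -/
lemma rG_mono (k : ℕ) : rG k ≤ rG (k + 1) := by
  have hconv := Real.convexOn_log_Gamma
  have hx : ((k : ℝ) + 1) / 2 ∈ Set.Ioi (0 : ℝ) := by simp; positivity
  have hy : ((k : ℝ) + 3) / 2 ∈ Set.Ioi (0 : ℝ) := by simp; positivity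
  have hmid := hconv.2 hx hy (by norm_num : (0:ℝ) ≤ 1/2) (by norm_num : (0:ℝ) ≤ 1/2)
    (by norm_num)
  have hpt : (1/2 : ℝ) • (((k : ℝ) + 1) / 2) + (1/2 : ℝ) • (((k : ℝ) + 3) / 2)
      = ((k : ℝ) + 2) / 2 := by simp [smul_eq_mul]; ring
  rw [hpt] at hmid
  simp only [Function.comp_apply, smul_eq_mul] at hmid
  -- hmid : log Γ((k+2)/2) ≤ ½ log Γ((k+1)/2) + ½ log Γ((k+3)/2)
  have hsq : Real.Gamma (((k : ℝ) + 2) / 2) ^ 2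
      ≤ Real.Gamma (((k : ℝ) + 1) / 2) * Real.Gamma (((k : ℝ) + 3) / 2) := by
    rw [← Real.log_le_log_iff (by positivity) (mul_pos (Gpos1 k) (Gpos3 k)),
      Real.log_pow, Real.log_mul (Gpos1 k).ne' (Gpos3 k).ne']
    push_cast
    linarith
  rw [rG, rG_succ, div_le_div_iff₀ (Gpos1 k) (Gpos2 k)]
  calc Real.Gamma (((k : ℝ) + 2) / 2) * Real.Gamma (((k : ℝ) + 2) / 2)
      = Real.Gamma (((k : ℝ) + 2) / 2) ^ 2 := (sq _).symm
    _ ≤ Real.Gamma (((k : ℝ) + 1) / 2) * Real.Gamma (((k : ℝ) + 3) / 2) := hsq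
    _ = Real.Gamma (((k : ℝ) + 3) / 2) * Real.Gamma (((k : ℝ) + 1) / 2) := mul_comm _ _

lemma rG_sq_le (k : ℕ) : (rG k) ^ 2 ≤ ((k : ℝ) + 1) / 2 := by
  rw [← rG_mul_succ k, sq]
  exact mul_le_mul_of_nonneg_left (rG_mono k) (rG_pos k).le

lemma le_rG_sq (k : ℕ) : ((k : ℝ) + 1) / 2 ≤ (rG (k + 1)) ^ 2 := by
  rw [← rG_mul_succ k, sq]
  exact mul_le_mul_of_nonneg_right (rG_mono k) (rG_pos (k + 1)).le

/-- Legendre duplication at `s = (k+1)/2`. -/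
lemma dup (k : ℕ) :
    Real.Gamma (((k : ℝ) + 1) / 2) * Real.Gamma (((k : ℝ) + 2) / 2)
      = (2 : ℝ) ^ (-(k : ℝ)) * Real.sqrt Real.pi * ((Nat.factorial k : ℕ) : ℝ) := by
  have h := Real.Gamma_mul_Gamma_add_half (((k : ℝ) + 1) / 2)
  have h1 : ((k : ℝ) + 1) / 2 + 1 / 2 = ((k : ℝ) + 2) / 2 := by ring
  have h2 : 2 * (((k : ℝ) + 1) / 2) = (k : ℝ) + 1 := by ring
  have h3 : (1 : ℝ) - ((k : ℝ) + 1) = -(k : ℝ) := by ring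
  rw [h1, h2, h3] at h
  rw [h, Real.Gamma_nat_eq_factorial]
  ring

/-- The key identity: `f(k)² = 4√π · r_k / (stirlingSeq k · √(2k))` for `k ≥ 1`. -/
lemma sq_eq (k : ℕ) (hk : 1 ≤ k) :
    (sphereEntropy k) ^ 2
      = 4 * Real.sqrt Real.pi * rG k / (Stirling.stirlingSeq k * Real.sqrt (2 * k)) := by
  have hc : (0 : ℝ) < k := by exact_mod_cast hk
  have hπ := Real.pi_pos
  have hfact : ((Nat.factorial k : ℕ) : ℝ) = Stirling.stirlingSeq k * (Real.sqrt (2 * k) * ((k : ℝ) / Real.exp 1) ^ k) := by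
    rw [Stirling.stirlingSeq]
    rw [div_mul_cancel₀]
    positivity
  -- expand the square
  have hΓ := Gpos1 k
  have hbase : (0:ℝ) ≤ 2 * k / (4 * Real.pi) := by positivity
  have hsq1 : ((2 * (k:ℝ) / (4 * Real.pi)) ^ ((k : ℝ) / 2)) ^ 2
      = (2 * (k:ℝ) / (4 * Real.pi)) ^ (k : ℝ) := by
    rw [← Real.rpow_natCast (_ ^ ((k:ℝ)/2)) 2, ← Real.rpow_mul hbase]
    norm_num
  have hsq2 : (Real.exp (-(k : ℝ) / 2)) ^ 2 = Real.exp (-(k:ℝ)) := by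
    rw [← Real.exp_nat_mul]; congr 1; push_cast; ring
  have hsq3 : (Real.pi ^ (((k : ℝ) + 1) / 2)) ^ 2 = Real.pi ^ ((k : ℝ) + 1) := by
    rw [← Real.rpow_natCast (_ ^ (((k:ℝ)+1)/2)) 2, ← Real.rpow_mul hπ.le]
    norm_num
  have hΓsq : (Real.Gamma (((k : ℝ) + 1) / 2)) ^ 2
      = (2 : ℝ) ^ (-(k : ℝ)) * Real.sqrt Real.pi * ((Nat.factorial k : ℕ) : ℝ) / rG k := by
    rw [eq_div_iff (rG_pos k).ne', rG, sq]
    field_simp [hΓ.ne']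
    rw [← dup k]
  have hs : (0:ℝ) < Stirling.stirlingSeq k := by
    rw [Stirling.stirlingSeq]
    have : (0:ℝ) < ((Nat.factorial k : ℕ) : ℝ) := by exact_mod_cast Nat.factorial_pos k
    positivity
  rw [sphereEntropy]
  rw [mul_pow, mul_pow, div_pow, mul_pow, hsq1, hsq2, hsq3, hΓsq]
  rw [hfact]
  -- now pure rpow algebra
  have e1 : (2 * (k:ℝ) / (4 * Real.pi)) ^ (k : ℝ)
      = (k:ℝ) ^ (k:ℝ) / ((2:ℝ) ^ (k:ℝ) * Real.pi ^ (k:ℝ)) := by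
    have : 2 * (k:ℝ) / (4 * Real.pi) = (k:ℝ) / (2 * Real.pi) := by
      field_simp; ring
    rw [this, Real.div_rpow hc.le (by positivity), Real.mul_rpow (by norm_num) hπ.le]
  have e2 : Real.pi ^ ((k : ℝ) + 1) = Real.pi ^ (k : ℝ) * Real.pi := by
    rw [Real.rpow_add hπ, Real.rpow_one]
  have e3 : ((k : ℝ) / Real.exp 1) ^ k = (k:ℝ) ^ (k:ℝ) / Real.exp (k:ℝ) := by
    rw [← Real.rpow_natCast ((k:ℝ) / Real.exp 1) k, Real.div_rpow hc.le (Real.exp_pos 1).le,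
      Real.exp_one_rpow]
  have e4 : (2:ℝ) ^ (-(k:ℝ)) = ((2:ℝ) ^ (k:ℝ))⁻¹ := by
    rw [Real.rpow_neg (by norm_num)]
  rw [e1, e2, e3, e4]
  have h2k : (0:ℝ) < (2:ℝ) ^ (k:ℝ) := Real.rpow_pos_of_pos (by norm_num) _
  have hπk : (0:ℝ) < Real.pi ^ (k:ℝ) := Real.rpow_pos_of_pos hπ _
  have hkk : (0:ℝ) < (k:ℝ) ^ (k:ℝ) := Real.rpow_pos_of_pos hc _
  have hek : (0:ℝ) < Real.exp (k:ℝ) := Real.exp_pos _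
  have hsπ : (0:ℝ) < Real.sqrt Real.pi := Real.sqrt_pos.mpr hπ
  have hsπ2 : Real.sqrt Real.pi * Real.sqrt Real.pi = Real.pi := Real.mul_self_sqrt hπ.le
  have hs2k : (0:ℝ) < Real.sqrt (2 * k) := Real.sqrt_pos.mpr (by positivity)
  have hexp : Real.exp (-(k:ℝ)) = (Real.exp (k:ℝ))⁻¹ := by
    rw [← Real.exp_neg]
  rw [hexp]
  field_simp [(rG_pos k).ne']
  ring_nf
  rw [Real.sq_sqrt hπ.le]

lemma le_rG_sq' (k : ℕ) (hk : 1 ≤ k) : (k : ℝ) / 2 ≤ (rG k) ^ 2 := by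
  obtain ⟨j, rfl⟩ := Nat.exists_eq_add_of_le hk
  rw [Nat.add_comm 1 j]
  have h := le_rG_sq j
  push_cast
  push_cast at h
  linarith

end SphereEntropyAux

/-- `lim_{k→∞} f(k) = √2`. -/
theorem sphereEntropy_tendsto_sqrt_two :
    Tendsto sphereEntropy atTop (nhds (Real.sqrt 2)) := by
  open SphereEntropyAux in
  have hπ := Real.pi_pos
  have hsπ : (0:ℝ) < Real.sqrt Real.pi := Real.sqrt_pos.mpr hπ
  have h1 : Tendsto (fun k : ℕ => 4 * Real.sqrt Real.pi / Stirling.stirlingSeq k) atTop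
      (nhds 4) := by
    have h := (tendsto_const_nhds (x := 4 * Real.sqrt Real.pi)
      (f := atTop (α := ℕ))).div Stirling.tendsto_stirlingSeq_sqrt_pi hsπ.ne'
    have he : 4 * Real.sqrt Real.pi / Real.sqrt Real.pi = 4 := by
      field_simp
    rwa [he] at h
  have h2 : Tendsto (fun k : ℕ => SphereEntropyAux.rG k / Real.sqrt (2 * k)) atTop
      (nhds (1/2)) := by
    have hub : Tendsto (fun k : ℕ => Real.sqrt (((k:ℝ) + 1) / (4 * k))) atTop
        (nhds (1/2)) := by
      have hin : Tendsto (fun k : ℕ => ((k:ℝ) + 1) / (4 * k)) atTop (nhds (1/4)) := by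
        have h0 : Tendsto (fun k : ℕ => ((1:ℝ) + 1 / k) / 4) atTop (nhds (1/4)) := by
          have : Tendsto (fun n : ℕ => 1 / (n : ℝ)) atTop (nhds 0) :=
            tendsto_one_div_atTop_nhds_zero_nat
          have h' := ((tendsto_const_nhds (x := (1:ℝ)) (f := atTop (α := ℕ))).add
            this).div_const 4
          simpa using h'
        refine h0.congr' ?_
        filter_upwards [eventually_ge_atTop 1] with k hk
        have hc : (0:ℝ) < k := by exact_mod_cast hk
        field_simp
        try ring
        try tauto
      have := hin.sqrt
      rwa [show Real.sqrt (1/4) = 1/2 by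
        rw [show (1/4:ℝ) = (1/2)^2 by norm_num, Real.sqrt_sq (by norm_num)]] at this
    refine tendsto_of_tendsto_of_tendsto_of_le_of_le' tendsto_const_nhds hub ?_ ?_
    · filter_upwards [eventually_ge_atTop 1] with k hk
      have hc : (0:ℝ) < k := by exact_mod_cast hk
      have hl : Real.sqrt ((k:ℝ)/2) ≤ SphereEntropyAux.rG k := by
        rw [show SphereEntropyAux.rG k = Real.sqrt (SphereEntropyAux.rG k ^ 2) from
          (Real.sqrt_sq (SphereEntropyAux.rG_pos k).le).symm]
        exact Real.sqrt_le_sqrt (SphereEntropyAux.le_rG_sq' k hk)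
      have hs2k : (0:ℝ) < Real.sqrt (2 * k) := Real.sqrt_pos.mpr (by positivity)
      calc (1/2 : ℝ) = Real.sqrt ((k:ℝ)/2) / Real.sqrt (2 * k) := by
            rw [← Real.sqrt_div (by positivity),
              show ((k:ℝ)/2) / (2 * k) = 1/4 by field_simp; ring,
              show (1/4:ℝ) = (1/2)^2 by norm_num, Real.sqrt_sq (by norm_num)]
        _ ≤ SphereEntropyAux.rG k / Real.sqrt (2 * k) := by gcongr
    · filter_upwards [eventually_ge_atTop 1] with k hk
      have hc : (0:ℝ) < k := by exact_mod_cast hk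
      have hu : SphereEntropyAux.rG k ≤ Real.sqrt (((k:ℝ) + 1)/2) := by
        rw [show SphereEntropyAux.rG k = Real.sqrt (SphereEntropyAux.rG k ^ 2) from
          (Real.sqrt_sq (SphereEntropyAux.rG_pos k).le).symm]
        exact Real.sqrt_le_sqrt (SphereEntropyAux.rG_sq_le k)
      have hs2k : (0:ℝ) < Real.sqrt (2 * k) := Real.sqrt_pos.mpr (by positivity)
      calc SphereEntropyAux.rG k / Real.sqrt (2 * k)
          ≤ Real.sqrt (((k:ℝ) + 1)/2) / Real.sqrt (2 * k) := by gcongr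
        _ = Real.sqrt (((k:ℝ) + 1) / (4 * k)) := by
            rw [← Real.sqrt_div (by positivity)]
            congr 1
            field_simp
            try ring
            try tauto
  have hsq : Tendsto (fun k : ℕ => sphereEntropy k ^ 2) atTop (nhds 2) := by
    have hmul := h1.mul h2
    norm_num at hmul
    refine hmul.congr' ?_
    filter_upwards [eventually_ge_atTop 1] with k hk
    rw [SphereEntropyAux.sq_eq k hk,
      show Real.sqrt (2 * (k:ℝ)) = Real.sqrt 2 * Real.sqrt k from
        Real.sqrt_mul (by norm_num) _]
    ring
  have hfin : Tendsto (fun k : ℕ => Real.sqrt (sphereEntropy k ^ 2)) atTop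
      (nhds (Real.sqrt 2)) := hsq.sqrt
  refine hfin.congr fun k => ?_
  refine Real.sqrt_sq ?_
  unfold sphereEntropy
  have hΓ := SphereEntropyAux.Gpos1 k
  positivity
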